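/- The constant function 1_B is a cyclic vector for the quasi-regular representation π: the closed linear span of {π(γ)1_B : γ ∈ F_r} equals L²(B,μ). -/

import Mathlib

/-!
Setting: the free group `F_r = ⟨a₁,…,a_r⟩` (`r ≥ 2`), its boundary `B` of infinite
reduced words, the visual measure `μ` on `B`, the Gromov product, the Poisson kernel
`P(γ,ξ) = (2r-1)^(2(γ|ξ)-|γ|)` and the Harish-Chandra function `Ξ`.
-/

open MeasureTheory Filter Topology ComplexConjugate
open scoped ENNReal

namespace ArxivFree

/-- The alphabet `S = {a₁^{±1},…,a_r^{±1}}` of generators and their inverses: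
a letter is a generator together with a sign. -/
abbrev Letter (r : ℕ) := Fin r × Bool

/-- The inverse of a letter. -/
def bar {r : ℕ} (x : Letter r) : Letter r := (x.1, !x.2)

/-- The boundary `B`: infinite reduced words over the alphabet, i.e. sequences of
letters in which no letter is immediately followed by its inverse. -/
abbrev Boundary (r : ℕ) := {ξ : ℕ → Letter r // ∀ i, ξ (i + 1) ≠ bar (ξ i)}

/-- `l` is a (finite) prefix of the infinite word `ξ`. -/
def IsPrefixSeq {r : ℕ} (l : List (Letter r)) (ξ : ℕ → Letter r) : Prop :=
  ∀ i, i < l.length → l[i]? = some (ξ i)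

/-- The cylinder `B_u`: infinite reduced words admitting the reduced word of `u`
as a prefix. -/
def cylinder {r : ℕ} (u : FreeGroup (Fin r)) : Set (Boundary r) :=
  {ξ | IsPrefixSeq (FreeGroup.toWord u) ξ.1}

/-- The Gromov product: the length of the longest common prefix of the finite word `l`
and the infinite word `ξ`. -/
def gromov {r : ℕ} (l : List (Letter r)) (ξ : ℕ → Letter r) : ℕ :=
  Nat.findGreatest (fun k => ∀ i, i < k → l[i]? = some (ξ i)) l.length

/-- The Poisson kernel `P(γ,ξ) = (2r-1)^(2(γ|ξ) - |γ|)`. -/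
noncomputable def PK {r : ℕ} (γ : FreeGroup (Fin r)) (ξ : Boundary r) : ℝ :=
  (2 * (r : ℝ) - 1) ^
    (2 * (gromov (FreeGroup.toWord γ) ξ.1 : ℤ) - ((FreeGroup.toWord γ).length : ℤ))

/-- The sphere `S_n ⊆ F_r` of elements of word length `n`, as a finite set. -/
noncomputable def sphere (r n : ℕ) : Finset (FreeGroup (Fin r)) :=
  (Set.Finite.preimage (Function.Injective.injOn FreeGroup.toWord_injective)
    (List.finite_length_eq (Letter r) n)).toFinset

/-- The Harish-Chandra function `Ξ(γ) = ∫_B P(γ,ξ)^{1/2} dμ(ξ)`. -/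
noncomputable def HC {r : ℕ} (μ : Measure (Boundary r)) (γ : FreeGroup (Fin r)) : ℝ :=
  ∫ ξ, Real.sqrt (PK γ ξ) ∂μ

lemma bar_bar {r : ℕ} (x : Letter r) : bar (bar x) = x := by
  simp [bar]

lemma reduced_getElem {r : ℕ} {l : List (Letter r)} (hl : FreeGroup.reduce l = l)
    {n : ℕ} (h : n + 1 < l.length) : l[n + 1]'h ≠ bar (l[n]'(by omega)) := by
  intro hEq
  have hdecomp : l = l.take n ++ (l[n]'(by omega)) :: (l[n+1]'h) :: l.drop (n + 2) := by
    conv_lhs => rw [← List.take_append_drop n l]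
    congr 1
    rw [List.drop_eq_getElem_cons (by omega : n < l.length),
      List.drop_eq_getElem_cons h]
  rw [hEq] at hdecomp
  exact FreeGroup.reduce.not (x := (l[n]'(by omega)).1) (b := (l[n]'(by omega)).2)
    (L₂ := l.take n) (L₃ := l.drop (n+2)) (by rw [hl]; exact hdecomp)

def cancelLen {r : ℕ} (l : List (Letter r)) (ξ : ℕ → Letter r) : ℕ :=
  Nat.findGreatest (fun k => ∀ i, i < k → l.reverse[i]? = some (bar (ξ i))) l.length

def concatSeq {r : ℕ} (l : List (Letter r)) (ξ : ℕ → Letter r) : ℕ → Letter r := fun n =>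
  if h : n < l.length - cancelLen l ξ then l[n]'(by omega)
  else ξ (n - (l.length - cancelLen l ξ) + cancelLen l ξ)

lemma concatSeq_reduced {r : ℕ} (l : List (Letter r)) (ξ : ℕ → Letter r)
    (hl : FreeGroup.reduce l = l) (hξ : ∀ i, ξ (i + 1) ≠ bar (ξ i)) :
    ∀ n, concatSeq l ξ (n + 1) ≠ bar (concatSeq l ξ n) := by
  intro n
  have hmL : cancelLen l ξ ≤ l.length := Nat.findGreatest_le _
  unfold concatSeq
  by_cases h1 : n + 1 < l.length - cancelLen l ξ
  · have h0 : n < l.length - cancelLen l ξ := by omega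
    rw [dif_pos h1, dif_pos h0]
    exact reduced_getElem hl (by omega)
  · by_cases h0 : n < l.length - cancelLen l ξ
    · -- junction case
      rw [dif_neg h1, dif_pos h0]
      set m := cancelLen l ξ with hmdef
      have hfg : Nat.findGreatest
          (fun k => ∀ i, i < k → l.reverse[i]? = some (bar (ξ i))) l.length = m := rfl
      have hmlt : m < l.length := by omega
      have hidx : n + 1 - (l.length - m) + m = m := by omega
      rw [hidx]
      have hnot : ¬ (∀ i, i < m + 1 → l.reverse[i]? = some (bar (ξ i))) :=
        Nat.findGreatest_is_greatest (k := m + 1) (by rw [hfg]; omega) (by omega)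
      have hQ : ∀ i, i < m → l.reverse[i]? = some (bar (ξ i)) := by
        rcases Nat.eq_zero_or_pos m with hz | hpos
        · intro i hi; omega
        · exact Nat.findGreatest_of_ne_zero hfg (by omega)
      have hrev : l.reverse[m]? ≠ some (bar (ξ m)) := by
        intro hcon
        apply hnot
        intro i hi
        rcases Nat.lt_succ_iff_lt_or_eq.mp hi with h | rfl
        · exact hQ i h
        · exact hcon
      intro hEq
      apply hrev
      have hidx2 : l.length - 1 - m = n := by omega
      rw [List.getElem?_reverse hmlt, List.getElem?_eq_getElem (by omega)]
      rw [hEq, bar_bar]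
      simp only [hidx2]
    · rw [dif_neg h1, dif_neg h0]
      have hidx : n + 1 - (l.length - cancelLen l ξ) + cancelLen l ξ =
          (n - (l.length - cancelLen l ξ) + cancelLen l ξ) + 1 := by omega
      rw [hidx]
      exact hξ _

/-- The action of the free group on its boundary. -/
def act {r : ℕ} (γ : FreeGroup (Fin r)) (ξ : Boundary r) : Boundary r :=
  ⟨concatSeq (FreeGroup.toWord γ) ξ.1,
    concatSeq_reduced _ _ (FreeGroup.reduce_toWord γ) ξ.2⟩


def ChainC {r : ℕ} (l : List (Letter r)) : Prop :=
  ∀ n (h : n + 1 < l.length), l[n + 1]'h ≠ bar (l[n]'(by omega))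

lemma chainC_cons {r : ℕ} {x : Letter r} {l : List (Letter r)} (h : ChainC (x :: l)) :
    ChainC l := by
  intro n hn
  have := h (n+1) (by simpa using Nat.succ_lt_succ hn)
  simpa using this

lemma reduce_eq_self_of_chainC {r : ℕ} : ∀ {l : List (Letter r)}, ChainC l →
    FreeGroup.reduce l = l
  | [], _ => rfl
  | [x], _ => rfl
  | x :: y :: l, h => by
    have ih : FreeGroup.reduce (y :: l) = y :: l :=
      reduce_eq_self_of_chainC (chainC_cons h)
    rw [FreeGroup.reduce.cons, ih]
    have hxy : y ≠ bar x := by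
      have := h 0 (by simp)
      simpa using this
    have : ¬ (x.1 = y.1 ∧ x.2 = !y.2) := by
      rintro ⟨h1, h2⟩
      apply hxy
      cases x; cases y; simp_all [bar]
    simp [this]

lemma chainC_take {r : ℕ} {l : List (Letter r)} (h : ChainC l) (k : ℕ) :
    ChainC (l.take k) := by
  intro n hn
  have hlen : n + 1 < l.length := by have hn' := hn; rw [List.length_take] at hn'; omega
  have h1 : (l.take k)[n+1]'hn = l[n+1]'hlen := List.getElem_take ..
  have h2 : (l.take k)[n]'(by omega) = l[n]'(by omega) := List.getElem_take ..
  rw [h1, h2]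
  exact h n hlen

lemma chainC_toWord {r : ℕ} (u : FreeGroup (Fin r)) : ChainC (FreeGroup.toWord u) :=
  fun _ h => reduced_getElem (FreeGroup.reduce_toWord u) h

/-- Cylinder of an arbitrary finite word. -/
def Cyl {r : ℕ} (l : List (Letter r)) : Set (Boundary r) := {ξ | IsPrefixSeq l ξ.1}

lemma measurable_eval {r : ℕ} (i : ℕ) :
    Measurable (fun ξ : Boundary r => ξ.1 i) :=
  (measurable_pi_apply i).comp measurable_subtype_coe

lemma measurableSet_Cyl {r : ℕ} (l : List (Letter r)) : MeasurableSet (Cyl l) := by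
  have : Cyl l = ⋂ i ∈ Finset.range l.length, {ξ : Boundary r | l[i]? = some (ξ.1 i)} := by
    ext ξ
    simp [Cyl, IsPrefixSeq]
  rw [this]
  refine MeasurableSet.biInter (Set.to_countable _) fun i _ => ?_
  have : {ξ : Boundary r | l[i]? = some (ξ.1 i)}
      = (fun ξ : Boundary r => ξ.1 i) ⁻¹' {a | l[i]? = some a} := rfl
  rw [this]
  exact measurable_eval i (Set.to_countable _).measurableSet

/-- The collection of cylinder sets of reduced words. -/
def cylSets (r : ℕ) : Set (Set (Boundary r)) :=
  {A | ∃ l : List (Letter r), ChainC l ∧ A = Cyl l}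

lemma Cyl_subset_of_mem {r : ℕ} {l₁ l₂ : List (Letter r)} {ξ : Boundary r}
    (hlen : l₁.length ≤ l₂.length) (h1 : ξ ∈ Cyl l₁) (h2 : ξ ∈ Cyl l₂) :
    Cyl l₂ ⊆ Cyl l₁ := by
  intro η hη i hi
  have e1 : l₁[i]? = some (ξ.1 i) := h1 i hi
  have e2 : l₂[i]? = some (ξ.1 i) := h2 i (by omega)
  have e3 : l₂[i]? = some (η.1 i) := hη i (by omega)
  rw [e2] at e3
  rw [e1, Option.some_inj.mp e3]

lemma isPiSystem_cylSets (r : ℕ) : IsPiSystem (cylSets r) := by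
  rintro A ⟨l₁, hc1, rfl⟩ B ⟨l₂, hc2, rfl⟩ ⟨ξ, hξ1, hξ2⟩
  rcases le_total l₁.length l₂.length with h | h
  · have := Cyl_subset_of_mem h hξ1 hξ2
    rw [Set.inter_eq_right.mpr this]
    exact ⟨l₂, hc2, rfl⟩
  · have := Cyl_subset_of_mem h hξ2 hξ1
    rw [Set.inter_eq_left.mpr this]
    exact ⟨l₁, hc1, rfl⟩

lemma eval_eq_iUnion_Cyl {r : ℕ} (i : ℕ) (a : Letter r) :
    {ξ : Boundary r | ξ.1 i = a} =
      ⋃ (l : List (Letter r)) (_ : ChainC l ∧ l.length = i + 1 ∧ l[i]? = some a), Cyl l := by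
  ext ξ
  constructor
  · intro (hξ : ξ.1 i = a)
    refine Set.mem_iUnion.mpr ⟨List.ofFn (fun j : Fin (i+1) => ξ.1 j), Set.mem_iUnion.mpr
      ⟨⟨?_, ?_, ?_⟩, ?_⟩⟩
    · intro n hn
      rw [List.getElem_ofFn, List.getElem_ofFn]
      exact ξ.2 n
    · simp
    · rw [List.getElem?_eq_getElem (by simp), List.getElem_ofFn]
      simpa using hξ
    · intro j hj
      rw [List.getElem?_eq_getElem (by simpa using hj), List.getElem_ofFn]
  · intro h
    rcases Set.mem_iUnion.mp h with ⟨l, hl⟩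
    rcases Set.mem_iUnion.mp hl with ⟨⟨_, hlen, hla⟩, hmem⟩
    have := hmem i (by omega)
    rw [hla] at this
    exact (Option.some_inj.mp this).symm

lemma generateFrom_cylSets (r : ℕ) :
    (inferInstance : MeasurableSpace (Boundary r)) =
      MeasurableSpace.generateFrom (cylSets r) := by
  refine le_antisymm ?_ (MeasurableSpace.generateFrom_le ?_)
  · show MeasurableSpace.comap (Subtype.val) MeasurableSpace.pi ≤ _
    rw [show (MeasurableSpace.pi : MeasurableSpace (ℕ → Letter r)) =
      ⨆ i, MeasurableSpace.comap (fun b => b i) inferInstance from rfl,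
      MeasurableSpace.comap_iSup]
    refine iSup_le fun i => ?_
    rw [MeasurableSpace.comap_comp]
    intro s hs
    obtain ⟨t, -, rfl⟩ := hs
    have : ((fun b => b i) ∘ (Subtype.val : Boundary r → ℕ → Letter r)) ⁻¹' t
        = ⋃ a ∈ t, {ξ : Boundary r | ξ.1 i = a} := by
      ext ξ; simp [Set.mem_iUnion]
    rw [this]
    refine MeasurableSet.biUnion (Set.to_countable t) fun a _ => ?_
    rw [eval_eq_iUnion_Cyl]
    exact MeasurableSet.iUnion fun l => MeasurableSet.iUnion fun hl =>
      MeasurableSpace.measurableSet_generateFrom ⟨l, hl.1, rfl⟩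
  · rintro A ⟨l, -, rfl⟩
    exact measurableSet_Cyl l

section Gromov

variable {r : ℕ}

lemma gromov_le (l : List (Letter r)) (ξ : ℕ → Letter r) : gromov l ξ ≤ l.length :=
  Nat.findGreatest_le _

lemma gromov_spec (l : List (Letter r)) (ξ : ℕ → Letter r) :
    ∀ i, i < gromov l ξ → l[i]? = some (ξ i) := by
  unfold gromov
  exact Nat.findGreatest_spec (P := fun k => ∀ i, i < k → l[i]? = some (ξ i)) (m := 0)
    (Nat.zero_le _) (fun i hi => absurd hi (Nat.not_lt_zero i))

lemma gromov_ge {l : List (Letter r)} {ξ : ℕ → Letter r} {k : ℕ} (hk : k ≤ l.length)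
    (h : ∀ i, i < k → l[i]? = some (ξ i)) : k ≤ gromov l ξ :=
  Nat.le_findGreatest hk h

lemma gromov_eq_of {l : List (Letter r)} {ξ : ℕ → Letter r} {k : ℕ} (hk : k ≤ l.length)
    (h1 : ∀ i, i < k → l[i]? = some (ξ i))
    (h2 : l[k]? ≠ some (ξ k) ∨ k = l.length) : gromov l ξ = k := by
  refine le_antisymm ?_ (gromov_ge hk h1)
  by_contra hlt
  push_neg at hlt
  have hsp := gromov_spec l ξ k hlt
  rcases h2 with h2 | h2
  · exact h2 hsp
  · have := gromov_le l ξ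
    omega

lemma isPrefixSeq_take_iff {l : List (Letter r)} {ξ : ℕ → Letter r} {k : ℕ}
    (hk : k ≤ l.length) :
    IsPrefixSeq (l.take k) ξ ↔ ∀ i, i < k → l[i]? = some (ξ i) := by
  unfold IsPrefixSeq
  constructor
  · intro h i hi
    have := h i (by rw [List.length_take]; omega)
    rwa [List.getElem?_take, if_pos hi] at this
  · intro h i hi
    rw [List.length_take] at hi
    rw [List.getElem?_take, if_pos (by omega)]
    exact h i (by omega)

lemma E_top (l : List (Letter r)) :
    {ξ : Boundary r | gromov l ξ.1 = l.length} = Cyl l := by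
  ext ξ
  constructor
  · intro h i hi
    exact gromov_spec l ξ.1 i (by rw [h] at *; omega)
  · intro h
    exact le_antisymm (gromov_le _ _) (gromov_ge le_rfl h)

lemma E_mid (l : List (Letter r)) {k : ℕ} (hk : k < l.length) :
    {ξ : Boundary r | gromov l ξ.1 = k} = Cyl (l.take k) \ Cyl (l.take (k+1)) := by
  ext ξ
  show gromov l ξ.1 = k ↔ IsPrefixSeq (l.take k) ξ.1 ∧ ¬ IsPrefixSeq (l.take (k+1)) ξ.1
  rw [isPrefixSeq_take_iff (by omega), isPrefixSeq_take_iff (by omega)]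
  constructor
  · intro h
    refine ⟨fun i hi => gromov_spec l ξ.1 i (by omega), fun hall => ?_⟩
    have := gromov_ge (k := k+1) (by omega) hall
    omega
  · rintro ⟨h1, h2⟩
    refine gromov_eq_of (by omega) h1 (Or.inl fun hEq => ?_)
    apply h2
    intro i hi
    rcases Nat.lt_succ_iff_lt_or_eq.mp hi with h | rfl
    · exact h1 i h
    · exact hEq

lemma measurableSet_E (l : List (Letter r)) (k : ℕ) :
    MeasurableSet {ξ : Boundary r | gromov l ξ.1 = k} := by
  rcases lt_trichotomy k l.length with h | h | h
  · rw [E_mid l h]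
    exact (measurableSet_Cyl _).diff (measurableSet_Cyl _)
  · subst h
    rw [E_top l]
    exact measurableSet_Cyl l
  · have : {ξ : Boundary r | gromov l ξ.1 = k} = ∅ := by
      ext ξ
      simp only [Set.mem_setOf_eq, Set.mem_empty_iff_false, iff_false]
      intro hEq
      have := gromov_le l ξ.1
      omega
    rw [this]
    exact MeasurableSet.empty

lemma measurable_gromovFun (l : List (Letter r)) :
    Measurable fun ξ : Boundary r => gromov l ξ.1 := by
  apply measurable_to_countable'
  intro k
  exact measurableSet_E l k

lemma Cyl_take_succ_subset {l : List (Letter r)} {k : ℕ} (hk : k < l.length) :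
    Cyl (l.take (k+1)) ⊆ Cyl (l.take k) := by
  intro ξ hξ
  have h1 : IsPrefixSeq (l.take (k+1)) ξ.1 := hξ
  have h2 := (isPrefixSeq_take_iff (l := l) (ξ := ξ.1) (k := k+1) (by omega)).mp h1
  exact (isPrefixSeq_take_iff (by omega : k ≤ l.length)).mpr fun i hi => h2 i (by omega)

end Gromov

/-- the constant function $1_B$ is a cyclic vector for $π$.
The closed linear span in $L²(B,μ)$ of the functions
$π(γ)1_B = P(γ,·)^{1/2}$, $γ ∈ F_r$, is all of $L²(B,μ)$. -/
theorem constant_function_cyclic {r : ℕ} (hr : 2 ≤ r)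
    [BorelSpace (Boundary r)]
    (μ : Measure (Boundary r)) [IsProbabilityMeasure μ]
    (hμ : ∀ u : FreeGroup (Fin r), u ≠ 1 →
      μ (cylinder u) =
        1 / (2 * (r : ℝ≥0∞) * (2 * (r : ℝ≥0∞) - 1) ^ ((FreeGroup.toWord u).length - 1))) :
    (Submodule.span ℂ {g : Lp ℂ 2 μ | ∃ γ : FreeGroup (Fin r),
        (g : Boundary r → ℂ) =ᵐ[μ]
          fun ξ => (Real.sqrt (PK γ ξ) : ℂ)}).topologicalClosure = ⊤ := by
  classical
  rw [Submodule.topologicalClosure_eq_top_iff, Submodule.eq_bot_iff]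
  intro g hg
  have hx3 : (3 : ℝ) ≤ 2 * (r : ℝ) - 1 := by
    have h2 : (2 : ℝ) ≤ (r : ℝ) := by exact_mod_cast hr
    linarith
  set x : ℝ := 2 * (r : ℝ) - 1 with hxdef
  have hx0 : (0 : ℝ) < x := by linarith
  have hx1 : (1 : ℝ) ≤ x := by linarith
  have hint : Integrable (g : Boundary r → ℂ) μ := (Lp.memLp g).integrable one_le_two
  -- Step 1: orthogonality against each Poisson kernel square root.
  have key : ∀ γ : FreeGroup (Fin r),
      ∫ ξ, ((Real.sqrt (PK γ ξ) : ℝ) : ℂ) * g ξ ∂μ = 0 := by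
    intro γ
    have hmeas : Measurable fun ξ : Boundary r => ((Real.sqrt (PK γ ξ) : ℝ) : ℂ) := by
      have heq : (fun ξ : Boundary r => ((Real.sqrt (PK γ ξ) : ℝ) : ℂ))
          = (fun k : ℕ => ((Real.sqrt (x ^ (2 * (k : ℤ) - ((FreeGroup.toWord γ).length : ℤ))) : ℝ) : ℂ))
            ∘ (fun ξ => gromov (FreeGroup.toWord γ) ξ.1) := by
        funext ξ
        simp only [Function.comp, PK, hxdef]
      rw [heq]
      exact measurable_from_top.comp (measurable_gromovFun _)
    have hbdd : ∀ ξ : Boundary r, ‖((Real.sqrt (PK γ ξ) : ℝ) : ℂ)‖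
        ≤ Real.sqrt (x ^ (((FreeGroup.toWord γ).length : ℤ))) := by
      intro ξ
      rw [Complex.norm_real, Real.norm_eq_abs, abs_of_nonneg (Real.sqrt_nonneg _)]
      apply Real.sqrt_le_sqrt
      show PK γ ξ ≤ x ^ (((FreeGroup.toWord γ).length : ℤ))
      unfold PK
      rw [← hxdef]
      exact zpow_le_zpow_right₀ hx1
        (by have := gromov_le (FreeGroup.toWord γ) ξ.1; omega)
    have hmem : MemLp (fun ξ : Boundary r => ((Real.sqrt (PK γ ξ) : ℝ) : ℂ)) 2 μ :=
      MemLp.of_bound hmeas.aestronglyMeasurable _ (Filter.Eventually.of_forall hbdd)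
    have hmemspan : hmem.toLp _ ∈ Submodule.span ℂ {h : Lp ℂ 2 μ | ∃ γ : FreeGroup (Fin r),
        (h : Boundary r → ℂ) =ᵐ[μ] fun ξ => (Real.sqrt (PK γ ξ) : ℂ)} :=
      Submodule.subset_span ⟨γ, hmem.coeFn_toLp⟩
    have h0 := (Submodule.mem_orthogonal _ g).mp hg _ hmemspan
    rw [L2.inner_def] at h0
    rw [← h0]
    apply integral_congr_ae
    filter_upwards [hmem.coeFn_toLp] with ξ hξ
    rw [RCLike.inner_apply, hξ, Complex.conj_ofReal, mul_comm]
  -- Step 2: rescale to remove the constant factor.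
  have key2 : ∀ γ : FreeGroup (Fin r),
      ∫ ξ, ((x : ℂ) ^ (gromov (FreeGroup.toWord γ) ξ.1)) * g ξ ∂μ = 0 := by
    intro γ
    set w := FreeGroup.toWord γ with hw
    set n := w.length with hn
    have hxn : (0 : ℝ) < x ^ n := by positivity
    have hs0 : (0 : ℝ) < Real.sqrt (x ^ n) := Real.sqrt_pos.mpr hxn
    have hPk : ∀ ξ : Boundary r,
        Real.sqrt (PK γ ξ) = x ^ (gromov w ξ.1) / Real.sqrt (x ^ n) := by
      intro ξ
      unfold PK
      rw [← hxdef, ← hw, ← hn]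
      have h1 : x ^ (2 * ((gromov w ξ.1 : ℤ)) - (n : ℤ))
          = (x ^ (gromov w ξ.1)) ^ 2 / x ^ n := by
        have h2 : ((x ^ (gromov w ξ.1)) ^ 2 : ℝ) = x ^ ((2 * gromov w ξ.1 : ℕ) : ℤ) := by
          rw [zpow_natCast, mul_comm 2, pow_mul]
        rw [h2, ← zpow_natCast x n, ← zpow_sub₀ (ne_of_gt hx0)]
        norm_cast
      rw [h1, Real.sqrt_div (by positivity), Real.sqrt_sq (by positivity)]
    have heq : ∫ ξ, ((Real.sqrt (x ^ n) : ℂ))⁻¹ * (((x : ℂ) ^ (gromov w ξ.1)) * g ξ) ∂μ = 0 := by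
      rw [← key γ]
      apply integral_congr_ae
      apply Filter.Eventually.of_forall
      intro ξ
      show ((Real.sqrt (x ^ n) : ℝ) : ℂ)⁻¹ * (((x : ℂ) ^ gromov w ξ.1) * g ξ)
          = ((Real.sqrt (PK γ ξ) : ℝ) : ℂ) * g ξ
      rw [hPk ξ, Complex.ofReal_div, Complex.ofReal_pow]
      ring
    rw [integral_const_mul] at heq
    rcases mul_eq_zero.mp heq with h | h
    · exact absurd h (by
        apply inv_ne_zero
        simp only [ne_eq, Complex.ofReal_eq_zero]
        exact ne_of_gt hs0)
    · exact h
  -- Step 3: all cylinder integrals of g vanish.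
  have main : ∀ n : ℕ, ∀ l : List (Letter r), ChainC l → l.length = n →
      ∫ ξ in Cyl l, g ξ ∂μ = 0 := by
    intro n
    induction n using Nat.strong_induction_on with
    | _ n IH =>
      intro l hc hlen
      have htw : FreeGroup.toWord (FreeGroup.mk l) = l := by
        rw [FreeGroup.toWord_mk, reduce_eq_self_of_chainC hc]
      have h0 := key2 (FreeGroup.mk l)
      rw [htw] at h0
      have hEmeas : ∀ k, MeasurableSet {ξ : Boundary r | gromov l ξ.1 = k} := measurableSet_E l
      have hxC0 : (x : ℂ) ≠ 0 := by
        simp only [ne_eq, Complex.ofReal_eq_zero]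
        exact ne_of_gt hx0
      have hintF : Integrable (fun ξ : Boundary r => (x : ℂ) ^ (gromov l ξ.1) * g ξ) μ := by
        refine hint.bdd_mul (c := x ^ n) ?_ (Filter.Eventually.of_forall fun ξ => ?_)
        · exact (measurable_from_top.comp (measurable_gromovFun l)).aestronglyMeasurable
        · rw [norm_pow, Complex.norm_real, Real.norm_eq_abs, abs_of_pos hx0]
          exact pow_le_pow_right₀ hx1 (by have := gromov_le l ξ.1; omega)
      have hcover : (⋃ k ∈ Finset.range (n+1), {ξ : Boundary r | gromov l ξ.1 = k})
          = Set.univ := by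
        ext ξ
        simp only [Set.mem_iUnion, Finset.mem_range, Set.mem_univ, iff_true,
          Set.mem_setOf_eq]
        exact ⟨gromov l ξ.1, by have := gromov_le l ξ.1; omega, rfl⟩
      have hdisj : (↑(Finset.range (n+1)) : Set ℕ).Pairwise
          (Function.onFun Disjoint (fun k => {ξ : Boundary r | gromov l ξ.1 = k})) := by
        intro i _ j _ hij
        exact Set.disjoint_left.mpr fun ξ h1 h2 => hij ((h1 : _ = i).symm.trans (h2 : _ = j))
      have hsum : ∑ k ∈ Finset.range (n+1),
          ∫ ξ in {ξ : Boundary r | gromov l ξ.1 = k}, (x : ℂ) ^ (gromov l ξ.1) * g ξ ∂μ = 0 := by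
        rw [← integral_biUnion_finset _ (fun k _ => hEmeas k) hdisj
          (fun k _ => hintF.integrableOn), hcover, setIntegral_univ]
        exact h0
      have hterm : ∀ k, ∫ ξ in {ξ : Boundary r | gromov l ξ.1 = k},
          (x : ℂ) ^ (gromov l ξ.1) * g ξ ∂μ
          = (x : ℂ) ^ k * ∫ ξ in {ξ : Boundary r | gromov l ξ.1 = k}, g ξ ∂μ := by
        intro k
        rw [← integral_const_mul]
        refine setIntegral_congr_fun (hEmeas k) fun ξ hξ => ?_
        rw [show gromov l ξ.1 = k from hξ]
      rcases n with _ | m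
      · rw [show (0:ℕ) + 1 = 1 from rfl, Finset.sum_range_one, hterm 0, pow_zero,
          one_mul] at hsum
        have hE0 : {ξ : Boundary r | gromov l ξ.1 = 0} = Cyl l := by
          rw [show (0 : ℕ) = l.length by omega]
          exact E_top l
        rwa [hE0] at hsum
      · have hI : ∀ j, j < m + 1 → ∫ ξ in Cyl (l.take j), g ξ ∂μ = 0 := fun j hj =>
          IH j hj (l.take j) (chainC_take hc j) (by rw [List.length_take]; omega)
        have hEn : {ξ : Boundary r | gromov l ξ.1 = m + 1} = Cyl l := by
          rw [show m + 1 = l.length by omega]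
          exact E_top l
        have hJ : ∀ k, k < m + 1 → ∫ ξ in {ξ : Boundary r | gromov l ξ.1 = k}, g ξ ∂μ
            = (∫ ξ in Cyl (l.take k), g ξ ∂μ) - ∫ ξ in Cyl (l.take (k+1)), g ξ ∂μ := by
          intro k hk
          rw [E_mid l (by omega)]
          exact integral_diff (measurableSet_Cyl _) hint.integrableOn
            (Cyl_take_succ_subset (by omega))
        have hJ0 : ∀ k, k < m → ∫ ξ in {ξ : Boundary r | gromov l ξ.1 = k}, g ξ ∂μ = 0 := by
          intro k hk
          rw [hJ k (by omega), hI k (by omega), hI (k+1) (by omega), sub_zero]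
        have htake : l.take (m + 1) = l := by
          rw [show m + 1 = l.length by omega, List.take_length]
        set I := ∫ ξ in Cyl l, g ξ ∂μ with hIdef
        have hJm : ∫ ξ in {ξ : Boundary r | gromov l ξ.1 = m}, g ξ ∂μ = -I := by
          rw [hJ m (by omega), hI m (by omega), htake, zero_sub]
        have hJm1 : ∫ ξ in {ξ : Boundary r | gromov l ξ.1 = m + 1}, g ξ ∂μ = I := by
          rw [hEn]
        rw [Finset.sum_range_succ, Finset.sum_range_succ] at hsum
        rw [hterm (m+1), hterm m, hJm, hJm1] at hsum
        have hrest : ∑ k ∈ Finset.range m,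
            ∫ ξ in {ξ : Boundary r | gromov l ξ.1 = k}, (x : ℂ) ^ (gromov l ξ.1) * g ξ ∂μ
            = 0 := by
          refine Finset.sum_eq_zero fun k hk => ?_
          rw [hterm k, hJ0 k (Finset.mem_range.mp hk), mul_zero]
        rw [hrest, zero_add] at hsum
        have hfac : ((x : ℂ) ^ (m+1) - (x : ℂ) ^ m) * I = 0 := by
          rw [sub_mul]
          linear_combination hsum
        have hne : ((x : ℂ) ^ (m+1) - (x : ℂ) ^ m) ≠ 0 := by
          have h1 : ((x : ℂ) ^ (m+1) - (x : ℂ) ^ m) = (x : ℂ) ^ m * ((x : ℂ) - 1) := by ring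
          rw [h1]
          refine mul_ne_zero (pow_ne_zero _ hxC0) (sub_ne_zero.mpr fun hc1 => ?_)
          have hx1' : x = 1 := by exact_mod_cast hc1
          linarith
        exact (mul_eq_zero.mp hfac).resolve_left hne
  -- Step 4: all set integrals vanish.
  have huniv : ∫ ξ, g ξ ∂μ = 0 := by
    have h1 := main 0 [] (fun k hk => absurd hk (by simp)) rfl
    rwa [show Cyl ([] : List (Letter r)) = Set.univ from by
      ext ξ; simp [Cyl, IsPrefixSeq], setIntegral_univ] at h1
  have hall : ∀ s : Set (Boundary r), MeasurableSet s → ∫ ξ in s, g ξ ∂μ = 0 := by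
    intro s hs
    refine MeasurableSpace.induction_on_inter (C := fun s _ => ∫ ξ in s, g ξ ∂μ = 0)
      (generateFrom_cylSets r) (isPiSystem_cylSets r) (by simp) ?_ ?_ ?_ s hs
    · rintro t ⟨l, hcl, rfl⟩
      exact main l.length l hcl rfl
    · intro t ht h0
      have hadd := integral_add_compl ht hint
      rw [h0, zero_add] at hadd
      exact hadd.trans huniv
    · intro f hd hm h0
      rw [integral_iUnion hm hd hint.integrableOn]
      simp [h0]
  -- Conclusion.
  have hzero : (g : Boundary r → ℂ) =ᵐ[μ] 0 :=
    ae_eq_zero_of_forall_setIntegral_eq_of_sigmaFinite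
      (fun s _ _ => hint.integrableOn) (fun s hs _ => hall s hs)
  exact Lp.eq_zero_iff_ae_eq_zero.mpr hzero

end ArxivFree
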